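/- For any positive integer n, the least common multiple of the binomial coefficients C(n,0), C(n,1), ..., C(n,n) equals ∏_p p^{e_p}, the product over all primes p ≤ n, where e_p is the number of positive integers r such that p^r ≤ n and p^r does not divide n+1. -/
import Mathlib

open Finset Nat

private lemma mod_eq_sub_one_of_dvd_succ {m n : ℕ} (hm : 0 < m) (h : m ∣ n + 1) :
    n % m = m - 1 := by
  obtain ⟨t, ht⟩ := h
  rcases t with _ | t
  · omega
  · have h2 : m * (t + 1) = m * t + m := by ring
    have h3 : n = m * t + (m - 1) := by omega
    rw [h3, Nat.mul_add_mod, Nat.mod_eq_of_lt (by omega)]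

private lemma factorization_finset_lcm (s : Finset ℕ) (f : ℕ → ℕ)
    (hf : ∀ i ∈ s, f i ≠ 0) (p : ℕ) :
    (s.lcm f).factorization p = s.sup fun i => (f i).factorization p := by
  classical
  induction s using Finset.induction with
  | empty => simp
  | @insert a s ha ih =>
    have h1 : f a ≠ 0 := hf a (Finset.mem_insert_self a s)
    have hf' : ∀ i ∈ s, f i ≠ 0 := fun i hi => hf i (Finset.mem_insert_of_mem hi)
    have h2 : s.lcm f ≠ 0 := by
      intro h0
      rw [Finset.lcm_eq_zero_iff] at h0
      obtain ⟨i, hi, hfi⟩ := h0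
      exact hf' i hi hfi
    rw [Finset.lcm_insert, Finset.sup_insert, lcm_eq_nat_lcm,
      Nat.factorization_lcm h1 h2, Finsupp.sup_apply, ih hf']

/-- For a positive integer `n`, `lcm(C(n,0), ..., C(n,n))` equals the product over all
primes `p ≤ n` of `p^{e_p}`, where `e_p` is the number of positive integers `r` with
`p^r ≤ n` and `p^r ∤ n+1`. -/
theorem lcm_choose_eq_prod_primes (n : ℕ) (hn : 0 < n) :
    (Finset.range (n + 1)).lcm (n.choose)
      = ∏ p ∈ (Finset.Icc 1 n).filter Nat.Prime,
          p ^ ((Finset.Icc 1 n).filter (fun r => p ^ r ≤ n ∧ ¬ p ^ r ∣ (n + 1))).card := by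
  classical
  set P := (Finset.Icc 1 n).filter Nat.Prime with hP
  set e := fun p => ((Finset.Icc 1 n).filter (fun r => p ^ r ≤ n ∧ ¬ p ^ r ∣ (n + 1))).card
    with he
  have hf : ∀ k ∈ Finset.range (n + 1), n.choose k ≠ 0 := by
    intro k hk
    exact (Nat.choose_pos (Nat.lt_succ_iff.1 (Finset.mem_range.1 hk))).ne'
  have hL : (Finset.range (n + 1)).lcm n.choose ≠ 0 := by
    intro h0
    rw [Finset.lcm_eq_zero_iff] at h0
    obtain ⟨i, hi, hfi⟩ := h0
    exact hf i hi hfi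
  have hprime : ∀ p ∈ P, p.Prime := fun p hp => (Finset.mem_filter.1 hp).2
  have hR : ∏ p ∈ P, p ^ e p ≠ 0 := by
    rw [Finset.prod_ne_zero_iff]
    intro p hp
    exact pow_ne_zero _ (hprime p hp).pos.ne'
  refine Nat.eq_of_factorization_eq hL hR fun q => ?_
  rw [factorization_finset_lcm _ _ hf q]
  -- compute RHS factorization at q
  have hRfact : (∏ p ∈ P, p ^ e p).factorization q = if q ∈ P then e q else 0 := by
    rw [Nat.factorization_prod (fun p hp => pow_ne_zero _ (hprime p hp).pos.ne')]
    rw [Finsupp.finset_sum_apply]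
    rw [Finset.sum_congr rfl (fun p hp => by
      rw [(Nat.Prime.factorization_pow (hprime p hp)), Finsupp.single_apply])]
    exact Finset.sum_ite_eq' P q e
  rw [hRfact]
  by_cases hq : q.Prime
  · by_cases hqn : q ≤ n
    · -- main case
      have hqP : q ∈ P := Finset.mem_filter.2 ⟨Finset.mem_Icc.2 ⟨hq.one_lt.le, hqn⟩, hq⟩
      rw [if_pos hqP]
      haveI : Fact q.Prime := ⟨hq⟩
      have hlog : Nat.log q n < n + 1 := lt_of_le_of_lt (Nat.log_le_self q n) (by omega)
      -- Kummer's theorem for each k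
      have kummer : ∀ k ≤ n, (n.choose k).factorization q
          = ((Finset.Ico 1 (n + 1)).filter
              (fun i => q ^ i ≤ k % q ^ i + (n - k) % q ^ i)).card := by
        intro k hk
        rw [Nat.factorization_def _ hq]
        exact padicValNat_choose hk hlog
      -- the target set, rewritten over Ico 1 (n+1)
      have hT : (Finset.Icc 1 n).filter (fun r => q ^ r ≤ n ∧ ¬ q ^ r ∣ (n + 1))
          = (Finset.Ico 1 (n + 1)).filter (fun r => q ^ r ≤ n ∧ ¬ q ^ r ∣ (n + 1)) := by
        rw [Finset.Ico_add_one_right_eq_Icc]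
      -- upper bound: carries are contained in the target set
      have hsubset : ∀ k ≤ n,
          ((Finset.Ico 1 (n + 1)).filter
              (fun i => q ^ i ≤ k % q ^ i + (n - k) % q ^ i))
          ⊆ (Finset.Ico 1 (n + 1)).filter (fun r => q ^ r ≤ n ∧ ¬ q ^ r ∣ (n + 1)) := by
        intro k hk i hi
        rw [Finset.mem_filter] at hi ⊢
        obtain ⟨hmem, hcarry⟩ := hi
        set m := q ^ i with hm
        have hm1 : 0 < m := pow_pos hq.pos i
        have hle1 : k % m ≤ k := Nat.mod_le _ _
        have hle2 : (n - k) % m ≤ n - k := Nat.mod_le _ _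
        refine ⟨hmem, by omega, ?_⟩
        intro hdvd
        have hnm : n % m = m - 1 := mod_eq_sub_one_of_dvd_succ hm1 hdvd
        have hsum : (k % m + (n - k) % m) % m = n % m := by
          rw [← Nat.add_mod]
          congr 1
          omega
        have h1 : k % m < m := Nat.mod_lt _ hm1
        have h2 : (n - k) % m < m := Nat.mod_lt _ hm1
        have h3 : (k % m + (n - k) % m) % m = k % m + (n - k) % m - m := by
          rw [Nat.mod_eq_sub_mod hcarry, Nat.mod_eq_of_lt (by omega)]
        omega
      -- attainment at k₀ = q ^ log q n - 1
      set Lg := Nat.log q n with hLg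
      have hpLn : q ^ Lg ≤ n := Nat.pow_log_le_self q hn.ne'
      have hpL1 : 1 ≤ q ^ Lg := Nat.one_le_pow _ _ hq.pos
      set k₀ := q ^ Lg - 1 with hk₀
      have hk₀n : k₀ ≤ n := by omega
      have hattain : ((Finset.Ico 1 (n + 1)).filter
            (fun i => q ^ i ≤ k₀ % q ^ i + (n - k₀) % q ^ i))
          = (Finset.Ico 1 (n + 1)).filter (fun r => q ^ r ≤ n ∧ ¬ q ^ r ∣ (n + 1)) := by
        refine Finset.Subset.antisymm (hsubset k₀ hk₀n) ?_
        intro i hi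
        rw [Finset.mem_filter] at hi ⊢
        obtain ⟨hmem, hin, hndvd⟩ := hi
        refine ⟨hmem, ?_⟩
        have hiL : i ≤ Lg := Nat.le_log_of_pow_le hq.one_lt hin
        set m := q ^ i with hm
        have hm1 : 0 < m := pow_pos hq.pos i
        have hdvdL : m ∣ q ^ Lg := pow_dvd_pow q hiL
        have hk₀mod : k₀ % m = m - 1 := by
          apply mod_eq_sub_one_of_dvd_succ hm1
          have : k₀ + 1 = q ^ Lg := by omega
          rw [this]; exact hdvdL
        have hnk : (n - k₀) % m = (n + 1) % m := by
          obtain ⟨c, hc⟩ := hdvdL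
          have : n + 1 = (n - k₀) + m * c := by omega
          rw [this, Nat.add_mul_mod_self_left]
        have hpos : 0 < (n - k₀) % m := by
          rw [hnk]
          rcases Nat.eq_zero_or_pos ((n + 1) % m) with h0 | h0
          · exact absurd (Nat.dvd_of_mod_eq_zero h0) hndvd
          · exact h0
        omega
      apply le_antisymm
      · apply Finset.sup_le
        intro k hk
        rw [kummer k (by simpa using Nat.lt_succ_iff.1 (Finset.mem_range.1 hk))]
        have hc := Finset.card_le_card (hsubset k (Nat.lt_succ_iff.1 (Finset.mem_range.1 hk)))
        rw [← hT] at hc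
        exact hc
      · have hmem : k₀ ∈ Finset.range (n + 1) := Finset.mem_range.2 (by omega)
        refine le_trans ?_ (Finset.le_sup hmem)
        rw [kummer k₀ hk₀n, hattain]
        exact le_of_eq (congrArg Finset.card hT)
    · -- q prime, q > n : both sides zero
      have hqP : q ∉ P := by
        rw [hP, Finset.mem_filter]
        intro h
        exact hqn (Finset.mem_Icc.1 h.1).2
      rw [if_neg hqP]
      apply Nat.le_zero.1
      apply Finset.sup_le
      intro k _
      rw [Nat.factorization_choose_eq_zero_of_lt (by omega)]
  · -- q not prime
    have hqP : q ∉ P := fun h => hq (hprime q h)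
    rw [if_neg hqP]
    apply Nat.le_zero.1
    apply Finset.sup_le
    intro k hk
    rw [Nat.factorization_eq_zero_of_not_prime _ hq]
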